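/- Let Y be a set of type 2 or of type 3 whose spine contains the point x, and let P be a plane in ℝ³. Then D_{x,r}(Y,P) > 1/4 for every r > 0. -/

import Mathlib

noncomputable section

open Metric Set

/-- Euclidean 3-space. -/
abbrev E3 := EuclideanSpace ℝ (Fin 3)

/-- The normalized local Hausdorff distance `D_{x,r}(E,F)`. -/
noncomputable def relDist (x : E3) (r : ℝ) (E F : Set E3) : ℝ :=
  r⁻¹ * max (sSup ((fun z => Metric.infDist z F) '' (E ∩ ball x r)))
            (sSup ((fun z => Metric.infDist z E) '' (F ∩ ball x r)))

/-- `R` is the composition of a translation and a rotation of `ℝ³`. -/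
def IsRigidMotion (R : E3 → E3) : Prop :=
  ∃ (f : E3 ≃ₗᵢ[ℝ] E3) (v : E3),
    LinearMap.det (f.toLinearEquiv.toLinearMap) = 1 ∧ ∀ x, R x = f x + v

/-- Sets of type 1 : planes (2-dimensional affine subspaces of `ℝ³`). -/
def IsType1 (Z : Set E3) : Prop :=
  ∃ P : AffineSubspace ℝ E3, Module.finrank ℝ P.direction = 2 ∧ Z = (P : Set E3)

/-- The standard propeller `Prop × ℝ ⊆ ℝ³`. -/
def YBase : Set E3 :=
  {x | (0 ≤ x 0 ∧ x 1 = 0) ∨ (x 0 ≤ 0 ∧ x 1 = -Real.sqrt 3 * x 0) ∨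
       (x 0 ≤ 0 ∧ x 1 = Real.sqrt 3 * x 0)}

/-- The spine `{x₁ = x₂ = 0}` of the standard set of type 2. -/
def YSpineBase : Set E3 := {x | x 0 = 0 ∧ x 1 = 0}

/-- The three faces of the standard set of type 2. -/
def YFaceBase : Fin 3 → Set E3 :=
  ![{x | 0 ≤ x 0 ∧ x 1 = 0},
    {x | x 0 ≤ 0 ∧ x 1 = -Real.sqrt 3 * x 0},
    {x | x 0 ≤ 0 ∧ x 1 = Real.sqrt 3 * x 0}]

/-- Sets of type 2. -/
def IsType2 (Y : Set E3) : Prop := ∃ R, IsRigidMotion R ∧ Y = R '' YBase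

/-- `Y` is a set of type 2 with spine `L`. -/
def Type2Spine (Y L : Set E3) : Prop :=
  ∃ R, IsRigidMotion R ∧ Y = R '' YBase ∧ L = R '' YSpineBase

/-- The four vertices of the regular tetrahedron. -/
noncomputable def tA : Fin 4 → E3 :=
  ![(WithLp.equiv 2 (Fin 3 → ℝ)).symm ![1, 0, 0],
    (WithLp.equiv 2 (Fin 3 → ℝ)).symm ![-(1/3), 2 * Real.sqrt 2 / 3, 0],
    (WithLp.equiv 2 (Fin 3 → ℝ)).symm ![-(1/3), -(Real.sqrt 2 / 3), Real.sqrt 6 / 3],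
    (WithLp.equiv 2 (Fin 3 → ℝ)).symm ![-(1/3), -(Real.sqrt 2 / 3), -(Real.sqrt 6 / 3)]]

/-- The standard set `T₀` of type 3 : the cone over the six edges of the tetrahedron. -/
def TBase : Set E3 :=
  {x | ∃ t : ℝ, 0 ≤ t ∧ ∃ i j : Fin 4, i ≠ j ∧ ∃ z ∈ segment ℝ (tA i) (tA j), x = t • z}

/-- The spine of `T₀` : the four half lines `[0, Aⱼ)`. -/
def TSpineBase : Set E3 := {x | ∃ t : ℝ, 0 ≤ t ∧ ∃ j : Fin 4, x = t • tA j}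

/-- The face of `T₀` over the edge `[Aᵢ, Aⱼ]`. -/
def TFaceBase (i j : Fin 4) : Set E3 :=
  {x | ∃ t : ℝ, 0 ≤ t ∧ ∃ z ∈ segment ℝ (tA i) (tA j), x = t • z}

/-- Sets of type 3. -/
def IsType3 (T : Set E3) : Prop := ∃ R, IsRigidMotion R ∧ T = R '' TBase

/-- `T` is a set of type 3 centered at `c`. -/
def Type3Center (T : Set E3) (c : E3) : Prop :=
  ∃ R, IsRigidMotion R ∧ T = R '' TBase ∧ c = R 0

/-- `T` is a set of type 3 with spine `L`. -/
def Type3Spine (T L : Set E3) : Prop :=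
  ∃ R, IsRigidMotion R ∧ T = R '' TBase ∧ L = R '' TSpineBase

/-- `T` is a set of type 3 centered at `c` with spine `L`. -/
def Type3CenterSpine (T : Set E3) (c : E3) (L : Set E3) : Prop :=
  ∃ R, IsRigidMotion R ∧ T = R '' TBase ∧ c = R 0 ∧ L = R '' TSpineBase

/-- Minimal cones : sets of type 1, 2 or 3. -/
def MinimalCone (Z : Set E3) : Prop := IsType1 Z ∨ IsType2 Z ∨ IsType3 Z

/-- The standing assumption : `E ⊆ ℝ³` is compact, contains the origin,
`0 < ε < 10⁻²⁵`, and `E` is `ε`-close to a minimal cone through `x` in every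
ball `B(x,r) ⊆ B(0,2)` centered on `E`. -/
def Standing (E : Set E3) (ε : ℝ) : Prop :=
  IsCompact E ∧ (0 : E3) ∈ E ∧ 0 < ε ∧ ε < (10 : ℝ) ^ (-25 : ℤ) ∧
    ∀ x ∈ E ∩ ball (0 : E3) 2, ∀ r : ℝ, 0 < r → ball x r ⊆ ball (0 : E3) 2 →
      ∃ Z, MinimalCone Z ∧ x ∈ Z ∧ relDist x r E Z ≤ ε

/-- `a(x,r)`. -/
noncomputable def aNum (E : Set E3) (x : E3) (r : ℝ) : ℝ :=
  sInf {t | ∃ P, IsType1 P ∧ x ∈ P ∧ t = relDist x r E P}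

/-- `b(x,r)`. -/
noncomputable def bNum (E : Set E3) (x : E3) (r : ℝ) : ℝ :=
  sInf {t | ∃ Y L, Type2Spine Y L ∧ x ∈ L ∧ t = relDist x r E Y}

/-- `c(x,r)`. -/
noncomputable def cNum (E : Set E3) (x : E3) (r : ℝ) : ℝ :=
  sInf {t | ∃ T, Type3Center T x ∧ t = relDist x r E T}

/-- `E₁` : the points of type 1. -/
def Eset1 (E : Set E3) (ε : ℝ) : Set E3 :=
  {x | x ∈ E ∩ ball (0 : E3) 2 ∧ ∃ r₀ > 0, ∀ r : ℝ, 0 < r → r < r₀ → aNum E x r ≤ 2 * ε}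

/-- `E₂` : the points of type 2. -/
def Eset2 (E : Set E3) (ε : ℝ) : Set E3 :=
  {x | x ∈ E ∩ ball (0 : E3) 2 ∧ ∃ r₀ > 0, ∀ r : ℝ, 0 < r → r < r₀ → bNum E x r ≤ 1500 * ε}

/-- `E₃` : the points of type 3. -/
def Eset3 (E : Set E3) (ε : ℝ) : Set E3 :=
  {x | x ∈ E ∩ ball (0 : E3) 2 ∧ ∃ r₀ > 0, ∀ r : ℝ, 0 < r → r < r₀ → cNum E x r ≤ 150 * ε}


section Aux

set_option maxHeartbeats 2000000 in
theorem claimA {V : Type*} [NormedAddCommGroup V] [InnerProductSpace ℝ V]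
    (hdim : Module.finrank ℝ V = 3) (w : V) (e : Fin 3 → V) (n : V)
    (hn : (inner ℝ n n : ℝ) = 1) (hw : (inner ℝ w w : ℝ) = 1)
    (he : ∀ i, (inner ℝ (e i) (e i) : ℝ) = 1)
    (hwe : ∀ i, (inner ℝ w (e i) : ℝ) = 0)
    (hee : ∀ i k, i ≠ k → (inner ℝ (e i) (e k) : ℝ) = -(1/2)) :
    (1:ℝ)/3 ≤ (inner ℝ w n : ℝ)^2 ∨ ∃ i, (1:ℝ)/3 ≤ (inner ℝ (e i) n : ℝ)^2 := by
  have H : ∀ i k : Fin 3, (inner ℝ (e i) (e k) : ℝ) = if i = k then 1 else -(1/2) := by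
    intro i k
    by_cases h : i = k
    · simp [-inner_self_eq_norm_sq_to_K, h, he]
    · simp [h, hee _ _ h]
  have Hw : ∀ i, (inner ℝ (e i) w : ℝ) = 0 := fun i => by rw [real_inner_comm]; exact hwe i
  have hsum : e 0 + e 1 + e 2 = 0 := by
    have h0 : (inner ℝ (e 0 + e 1 + e 2) (e 0 + e 1 + e 2) : ℝ) = 0 := by
      simp only [inner_add_left, inner_add_right, he 0, he 1, he 2, hee 0 1 (by decide), hee 0 2 (by decide), hee 1 0 (by decide), hee 1 2 (by decide), hee 2 0 (by decide), hee 2 1 (by decide)]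
      norm_num
    exact inner_self_eq_zero.mp (by exact_mod_cast h0)
  have hli : LinearIndependent ℝ ![w, e 0, e 1] := by
    rw [Fintype.linearIndependent_iff]
    intro g hg
    have h1 : (inner ℝ w (∑ i, g i • ![w, e 0, e 1] i) : ℝ) = 0 := by rw [hg]; simp
    have h2 : (inner ℝ (e 0) (∑ i, g i • ![w, e 0, e 1] i) : ℝ) = 0 := by rw [hg]; simp
    have h3 : (inner ℝ (e 1) (∑ i, g i • ![w, e 0, e 1] i) : ℝ) = 0 := by rw [hg]; simp
    simp only [Fin.sum_univ_three, Matrix.cons_val_zero, Matrix.cons_val_one, Matrix.head_cons,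
      Matrix.cons_val_two, Matrix.tail_cons, inner_add_right, real_inner_smul_right,
      hw, hwe, Hw, he 0, he 1, he 2, hee 0 1 (by decide), hee 0 2 (by decide), hee 1 0 (by decide), hee 1 2 (by decide), hee 2 0 (by decide), hee 2 1 (by decide)] at h1 h2 h3
    norm_num at h1 h2 h3
    intro i
    fin_cases i <;> simp <;> linarith
  have hcard : Fintype.card (Fin 3) = Module.finrank ℝ V := by simp [hdim]
  have hspan := hli.span_eq_top_of_card_eq_finrank hcard
  have hn' : n ∈ Submodule.span ℝ (Set.range ![w, e 0, e 1]) := by rw [hspan]; trivial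
  rw [Finsupp.mem_span_range_iff_exists_finsupp] at hn'
  obtain ⟨c, hc⟩ := hn'
  have hc' : c 0 • w + c 1 • e 0 + c 2 • e 1 = n := by
    rw [← hc, Finsupp.sum_fintype _ _ (by simp)]
    simp [Fin.sum_univ_three, add_assoc]
  have e2 : e 2 = -e 0 - e 1 := by
    have := hsum; linear_combination (norm := module) this
  by_contra hcon
  push_neg at hcon
  obtain ⟨hc0, hc1⟩ := hcon
  have a0 := hc1 0; have a1 := hc1 1; have a2 := hc1 2
  have ew : (inner ℝ w n : ℝ) = c 0 := by
    rw [← hc']; simp [-inner_self_eq_norm_sq_to_K, inner_add_right, real_inner_smul_right, hw, hwe]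
  have e0n : (inner ℝ (e 0) n : ℝ) = c 1 - c 2 / 2 := by
    rw [← hc']; simp [-inner_self_eq_norm_sq_to_K, inner_add_right, real_inner_smul_right, Hw, he 0, he 1, he 2, hee 0 1 (by decide), hee 0 2 (by decide), hee 1 0 (by decide), hee 1 2 (by decide), hee 2 0 (by decide), hee 2 1 (by decide)]; ring
  have e1n : (inner ℝ (e 1) n : ℝ) = -(c 1)/2 + c 2 := by
    rw [← hc']; simp [-inner_self_eq_norm_sq_to_K, inner_add_right, real_inner_smul_right, Hw, he 0, he 1, he 2, hee 0 1 (by decide), hee 0 2 (by decide), hee 1 0 (by decide), hee 1 2 (by decide), hee 2 0 (by decide), hee 2 1 (by decide)]; ring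
  have e2n : (inner ℝ (e 2) n : ℝ) = -(c 1)/2 - c 2/2 := by
    rw [e2, ← hc']
    simp [-inner_self_eq_norm_sq_to_K, inner_add_right, inner_sub_left, inner_neg_left, real_inner_smul_right, Hw, he 0, he 1, he 2, hee 0 1 (by decide), hee 0 2 (by decide), hee 1 0 (by decide), hee 1 2 (by decide), hee 2 0 (by decide), hee 2 1 (by decide)]
    ring
  have hnorm : c 0 ^2 + c 1^2 + c 2^2 - c 1 * c 2 = 1 := by
    rw [← hc'] at hn
    simp only [inner_add_left, inner_add_right, real_inner_smul_left, real_inner_smul_right,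
      hw, hwe, Hw, he 0, he 1, he 2, hee 0 1 (by decide), hee 0 2 (by decide), hee 1 0 (by decide), hee 1 2 (by decide), hee 2 0 (by decide), hee 2 1 (by decide)] at hn
    ring_nf at hn ⊢
    linarith [hn]
  rw [ew] at hc0
  rw [e0n] at a0; rw [e1n] at a1; rw [e2n] at a2
  nlinarith [hc0, a0, a1, a2, hnorm]


set_option maxHeartbeats 2000000 in
theorem keyLemma (Y P : Set E3) (x : E3) (w : E3) (e : Fin 3 → E3)
    (hw : (inner ℝ w w : ℝ) = 1)
    (he : ∀ i, (inner ℝ (e i) (e i) : ℝ) = 1)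
    (hwe : ∀ i, (inner ℝ w (e i) : ℝ) = 0)
    (hee : ∀ i k, i ≠ k → (inner ℝ (e i) (e k) : ℝ) = -(1/2))
    (hmw : ∀ s : ℝ, 0 ≤ s → x + s • w ∈ Y)
    (hme : ∀ i, ∀ s : ℝ, 0 ≤ s → x + s • e i ∈ Y)
    (hP : IsType1 P) (r : ℝ) (hr : 0 < r) : 1 / 4 < relDist x r Y P := by
  obtain ⟨Q, hQ2, rfl⟩ := hP
  -- Q is nonempty
  have hQne : (Q : Set E3).Nonempty := by
    rcases Q.eq_bot_or_nonempty with h | h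
    · exfalso; rw [h] at hQ2; rw [AffineSubspace.direction_bot] at hQ2; simp at hQ2
    · exact h
  obtain ⟨p, hp⟩ := hQne
  -- unit normal
  have hdim3 : Module.finrank ℝ E3 = 3 := by simp [finrank_euclideanSpace_fin]
  have horth : Module.finrank ℝ (Q.direction)ᗮ = 1 := by
    have := Submodule.finrank_add_finrank_orthogonal (K := Q.direction)
    omega
  obtain ⟨n0, hn0mem, hn0ne⟩ : ∃ n0 ∈ (Q.direction)ᗮ, n0 ≠ 0 := by
    by_contra hcon
    push_neg at hcon
    have : (Q.direction)ᗮ = ⊥ := by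
      rw [Submodule.eq_bot_iff]; intro y hy; exact hcon y hy
    rw [this] at horth; simp at horth
  set n : E3 := ‖n0‖⁻¹ • n0 with hn_def
  have hnorm0 : ‖n0‖ ≠ 0 := norm_ne_zero_iff.mpr hn0ne
  have hn1 : ‖n‖ = 1 := by
    rw [hn_def, norm_smul]; simp [abs_of_nonneg (inv_nonneg.mpr (norm_nonneg n0))]
    field_simp
  have hnmem : n ∈ (Q.direction)ᗮ := Submodule.smul_mem _ _ hn0mem
  -- lower bound on infDist via the normal
  have hlow : ∀ z : E3, |(inner ℝ (z - p) n : ℝ)| ≤ infDist z (Q : Set E3) := by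
    intro z
    have : Nonempty ((Q : Set E3) : Set E3) := ⟨⟨p, hp⟩⟩
    rw [Metric.infDist_eq_iInf]
    apply le_ciInf
    rintro ⟨q, hq⟩
    · 
      have hpq : p -ᵥ q ∈ Q.direction := AffineSubspace.vsub_mem_direction hp hq
      have h0 : (inner ℝ (p - q) n : ℝ) = 0 := by
        exact (Submodule.mem_orthogonal Q.direction n).mp hnmem (p - q) hpq
      have : (inner ℝ (z - q) n : ℝ) = inner ℝ (z - p) n := by
        have : z - q = (z - p) + (p - q) := by abel
        rw [this, inner_add_left, h0, add_zero]
      calc |(inner ℝ (z - p) n : ℝ)| = |(inner ℝ (z - q) n : ℝ)| := by rw [this]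
        _ ≤ ‖z - q‖ * ‖n‖ := abs_real_inner_le_norm _ _
        _ = dist z q := by rw [hn1, mul_one, dist_eq_norm]
  -- pick a good direction
  have hnn : (inner ℝ n n : ℝ) = 1 := by
    rw [real_inner_self_eq_norm_sq, hn1]; norm_num
  obtain ⟨d, hd2, hdmem⟩ : ∃ d : E3, ((1:ℝ)/3 ≤ (inner ℝ d n : ℝ)^2 ∧ (inner ℝ d d : ℝ) = 1)
      ∧ ∀ s : ℝ, 0 ≤ s → x + s • d ∈ Y := by
    rcases claimA hdim3 w e n hnn hw he hwe hee with h | ⟨i, h⟩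
    · exact ⟨w, ⟨h, hw⟩, hmw⟩
    · exact ⟨e i, ⟨h, he i⟩, hme i⟩
  obtain ⟨hd13, hdd⟩ := hd2
  have hdnorm : ‖d‖ = 1 := by
    have := real_inner_self_eq_norm_sq d
    nlinarith [norm_nonneg d, hdd]
  set s0 : ℝ := inner ℝ (x - p) n with hs0
  -- find a good point z
  obtain ⟨z, hzY, hzball, hzfar⟩ : ∃ z, z ∈ Y ∧ z ∈ ball x r ∧ r/4 < infDist z (Q : Set E3) := by
    by_cases hcase : r/4 < |s0|
    · refine ⟨x, ?_, mem_ball_self hr, lt_of_lt_of_le hcase (hlow x)⟩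
      have := hmw 0 le_rfl; simpa using this
    · push_neg at hcase
      set t : ℝ := inner ℝ d n with ht
      refine ⟨x + (0.99 * r) • d, hdmem _ (by positivity), ?_, ?_⟩
      · rw [mem_ball, dist_eq_norm]
        have : x + (0.99 * r) • d - x = (0.99 * r) • d := by abel
        rw [this, norm_smul, hdnorm, mul_one, Real.norm_eq_abs,
          abs_of_nonneg (by positivity : (0:ℝ) ≤ (0.99:ℝ) * r)]
        linarith
      · have hinner : (inner ℝ (x + (0.99 * r) • d - p) n : ℝ) = s0 + (0.99 * r) * t := by
          have : x + (0.99 * r) • d - p = (x - p) + (0.99 * r) • d := by abel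
          rw [this, inner_add_left, real_inner_smul_left, hs0, ht]
        have hsq : (r/4)^2 < (s0 + (0.99 * r) * t)^2 := by
          have hs0sq : s0^2 ≤ (r/4)^2 := by
            have := abs_nonneg s0
            nlinarith [hcase, sq_abs s0, abs_nonneg s0]
          have hrt : (1:ℝ)/3 * (r*r) ≤ (t*r)^2 := by nlinarith [hd13, mul_pos hr hr]
          nlinarith [hrt, hs0sq, sq_nonneg (s0 + 0.495 * (r * t)), mul_pos hr hr]
        have habs : r/4 < |s0 + (0.99 * r) * t| := by
          nlinarith [hsq, sq_abs (s0 + (0.99 * r) * t), abs_nonneg (s0 + (0.99 * r) * t), hr]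
        calc r/4 < |s0 + (0.99 * r) * t| := habs
          _ = |(inner ℝ (x + (0.99 * r) • d - p) n : ℝ)| := by rw [hinner]
          _ ≤ _ := hlow _
  -- conclude
  have hBdd : BddAbove ((fun z => infDist z ((Q : Set E3))) '' (Y ∩ ball x r)) := by
    refine ⟨infDist x (Q : Set E3) + r, ?_⟩
    rintro _ ⟨z', ⟨_, hball⟩, rfl⟩
    calc infDist z' (Q : Set E3) ≤ infDist x (Q : Set E3) + dist z' x :=
          infDist_le_infDist_add_dist
      _ ≤ infDist x (Q : Set E3) + r := by
          have := (mem_ball.mp hball).le; linarith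
  have hmem' : infDist z (Q : Set E3) ∈
      (fun z => infDist z ((Q : Set E3))) '' (Y ∩ ball x r) := ⟨z, ⟨hzY, hzball⟩, rfl⟩
  have hS1 : r/4 < sSup ((fun z => infDist z ((Q : Set E3))) '' (Y ∩ ball x r)) :=
    lt_of_lt_of_le hzfar (le_csSup hBdd hmem')
  rw [relDist]
  calc (1:ℝ)/4 = r⁻¹ * (r/4) := by field_simp
    _ < r⁻¹ * sSup ((fun z => infDist z ((Q : Set E3))) '' (Y ∩ ball x r)) :=
        mul_lt_mul_of_pos_left hS1 (inv_pos.mpr hr)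
    _ ≤ _ := mul_le_mul_of_nonneg_left (le_max_left _ _) (inv_nonneg.mpr hr.le)


noncomputable def yDir : Fin 3 → E3 :=
  ![(WithLp.equiv 2 (Fin 3 → ℝ)).symm ![1, 0, 0],
    (WithLp.equiv 2 (Fin 3 → ℝ)).symm ![-(1/2), Real.sqrt 3 / 2, 0],
    (WithLp.equiv 2 (Fin 3 → ℝ)).symm ![-(1/2), -(Real.sqrt 3 / 2), 0]]

noncomputable def yW : E3 := (WithLp.equiv 2 (Fin 3 → ℝ)).symm ![0, 0, 1]

lemma yW_inner : (inner ℝ yW yW : ℝ) = 1 := by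
  simp [-inner_self_eq_norm_sq_to_K, yW, PiLp.inner_apply, Fin.sum_univ_three, RCLike.inner_apply, conj_trivial]

lemma yDir_inner (i k : Fin 3) :
    (inner ℝ (yDir i) (yDir k) : ℝ) = if i = k then 1 else -(1/2) := by
  have h3 : Real.sqrt 3 ^ 2 = 3 := Real.sq_sqrt (by norm_num)
  fin_cases i <;> fin_cases k <;>
    simp [-inner_self_eq_norm_sq_to_K, yDir, PiLp.inner_apply, Fin.sum_univ_three, RCLike.inner_apply, conj_trivial] <;>
    nlinarith [h3]

lemma yW_yDir_inner (i : Fin 3) : (inner ℝ yW (yDir i) : ℝ) = 0 := by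
  fin_cases i <;>
    simp [yW, yDir, PiLp.inner_apply, Fin.sum_univ_three, RCLike.inner_apply, conj_trivial]

lemma yBase_mem (x0 : E3) (hx0 : x0 ∈ YSpineBase) (s : ℝ) (hs : 0 ≤ s) (i : Fin 3) :
    x0 + s • yDir i ∈ YBase := by
  obtain ⟨h0, h1⟩ := hx0
  have e0 : ∀ c : E3, (x0 + s • c) 0 = s * c 0 := by
    intro c; simp [PiLp.add_apply, PiLp.smul_apply, smul_eq_mul, h0]
  have e1 : ∀ c : E3, (x0 + s • c) 1 = s * c 1 := by
    intro c; simp [PiLp.add_apply, PiLp.smul_apply, smul_eq_mul, h1]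
  fin_cases i
  · left
    rw [e0, e1]
    simp [yDir]
    exact hs
  · right; left
    rw [e0, e1]
    simp [yDir]
    exact ⟨hs, by ring⟩
  · right; right
    rw [e0, e1]
    simp [yDir]
    exact ⟨hs, by ring⟩

lemma yBase_memW (x0 : E3) (hx0 : x0 ∈ YSpineBase) (s : ℝ) (hs : 0 ≤ s) :
    x0 + s • yW ∈ YBase := by
  obtain ⟨h0, h1⟩ := hx0
  left
  constructor <;> simp [PiLp.add_apply, PiLp.smul_apply, smul_eq_mul, h0, h1, yW]

lemma tA_inner (i j : Fin 4) : (inner ℝ (tA i) (tA j) : ℝ) = if i = j then 1 else -(1/3) := by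
  have h2 : Real.sqrt 2 ^ 2 = 2 := Real.sq_sqrt (by norm_num)
  have h6 : Real.sqrt 6 ^ 2 = 6 := Real.sq_sqrt (by norm_num)
  fin_cases i <;> fin_cases j <;>
    simp [-inner_self_eq_norm_sq_to_K, tA, PiLp.inner_apply, Fin.sum_univ_three, RCLike.inner_apply, conj_trivial] <;>
    nlinarith [h2, h6]

noncomputable def tV (j i : Fin 4) : E3 :=
  (3 * Real.sqrt 2 / 4) • tA i + (Real.sqrt 2 / 4) • tA j

lemma tV_inner_self {j i : Fin 4} (h : i ≠ j) : (inner ℝ (tV j i) (tV j i) : ℝ) = 1 := by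
  have h2 : Real.sqrt 2 ^ 2 = 2 := Real.sq_sqrt (by norm_num)
  simp only [tV, inner_add_left, inner_add_right, real_inner_smul_left, real_inner_smul_right,
    tA_inner, eq_self_iff_true, if_true, if_pos rfl, if_neg h, if_neg (Ne.symm h)]
  nlinarith [h2]

lemma tA_tV_inner {j i : Fin 4} (h : i ≠ j) : (inner ℝ (tA j) (tV j i) : ℝ) = 0 := by
  simp only [tV, inner_add_right, real_inner_smul_right, tA_inner, eq_self_iff_true, if_true,
    if_pos rfl, if_neg (Ne.symm h)]
  ring

lemma tV_tV_inner {j i k : Fin 4} (hij : i ≠ j) (hkj : k ≠ j) (hik : i ≠ k) :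
    (inner ℝ (tV j i) (tV j k) : ℝ) = -(1/2) := by
  have h2 : Real.sqrt 2 ^ 2 = 2 := Real.sq_sqrt (by norm_num)
  simp only [tV, inner_add_left, inner_add_right, real_inner_smul_left, real_inner_smul_right,
    tA_inner, eq_self_iff_true, if_true, if_pos rfl, if_neg hij, if_neg (Ne.symm hij),
    if_neg hkj, if_neg (Ne.symm hkj), if_neg hik, if_neg (Ne.symm hik)]
  nlinarith [h2]

lemma tCone_mem {j i : Fin 4} (h : j ≠ i) {α β : ℝ} (hα : 0 ≤ α) (hβ : 0 ≤ β) :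
    α • tA j + β • tA i ∈ TBase := by
  rcases eq_or_lt_of_le (by positivity : (0:ℝ) ≤ α + β) with ht | ht
  · have hα0 : α = 0 := by linarith
    have hβ0 : β = 0 := by linarith
    refine ⟨0, le_rfl, j, i, h, tA j, left_mem_segment ℝ _ _, ?_⟩
    simp [hα0, hβ0]
  · refine ⟨α + β, le_of_lt ht, j, i, h, (α/(α+β)) • tA j + (β/(α+β)) • tA i, ?_, ?_⟩
    · exact ⟨α/(α+β), β/(α+β), by positivity, by positivity, by field_simp, rfl⟩
    · rw [smul_add, smul_smul, smul_smul]
      congr 1 <;> congr 1 <;> field_simp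

lemma mem_image_rigid {f : E3 ≃ₗᵢ[ℝ] E3} {v : E3} {R : E3 → E3} (hR : ∀ y, R y = f y + v)
    {B : Set E3} {x0 c : E3} {s : ℝ} (h : x0 + s • c ∈ B) : R x0 + s • f c ∈ R '' B := by
  refine ⟨x0 + s • c, h, ?_⟩
  rw [hR, hR, map_add, LinearIsometryEquiv.map_smul]
  abel

end Aux

/-- Lemma 3.1 (2.10): a set of type 2 or 3 whose spine contains `x` is at
normalized Hausdorff distance more than `1/4` from every plane, at every scale. -/
theorem stmt4 (Y L P : Set E3) (x : E3)
    (hY : Type2Spine Y L ∨ Type3Spine Y L) (hx : x ∈ L) (hP : IsType1 P) :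
    ∀ r : ℝ, 0 < r → 1 / 4 < relDist x r Y P := by
  intro r hr
  rcases hY with ⟨R, ⟨f, v, hdet, hR⟩, hYeq, hLeq⟩ | ⟨R, ⟨f, v, hdet, hR⟩, hYeq, hLeq⟩
  · -- type 2
    rw [hLeq] at hx
    obtain ⟨x0, hx0, hxeq⟩ := hx
    have hx' : x = R x0 := hxeq.symm
    subst hx'
    refine keyLemma Y P (R x0) (f yW) (fun i => f (yDir i)) ?_ ?_ ?_ ?_ ?_ ?_ hP r hr
    · rw [LinearIsometryEquiv.inner_map_map]; exact yW_inner
    · intro i; rw [LinearIsometryEquiv.inner_map_map]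
      have := yDir_inner i i; simpa using this
    · intro i; rw [LinearIsometryEquiv.inner_map_map]; exact yW_yDir_inner i
    · intro i k hik; rw [LinearIsometryEquiv.inner_map_map]
      have := yDir_inner i k; rw [if_neg hik] at this; exact this
    · intro s hs
      rw [hYeq]
      exact mem_image_rigid hR (yBase_memW x0 hx0 s hs)
    · intro i s hs
      rw [hYeq]
      exact mem_image_rigid hR (yBase_mem x0 hx0 s hs i)
  · -- type 3
    rw [hLeq] at hx
    obtain ⟨x0, hx0, hxeq⟩ := hx
    obtain ⟨t0, ht0, j, hx0eq⟩ := hx0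
    have hx' : x = R x0 := hxeq.symm
    subst hx'
    subst hx0eq
    have hne : ∀ m : Fin 3, j.succAbove m ≠ j := fun m => Fin.succAbove_ne j m
    refine keyLemma Y P (R (t0 • tA j)) (f (tA j)) (fun m => f (tV j (j.succAbove m)))
      ?_ ?_ ?_ ?_ ?_ ?_ hP r hr
    · rw [LinearIsometryEquiv.inner_map_map]
      have := tA_inner j j; simpa using this
    · intro m; rw [LinearIsometryEquiv.inner_map_map]; exact tV_inner_self (hne m)
    · intro m; rw [LinearIsometryEquiv.inner_map_map]; exact tA_tV_inner (hne m)
    · intro m k hmk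
      rw [LinearIsometryEquiv.inner_map_map]
      exact tV_tV_inner (hne m) (hne k)
        (fun hcon => hmk (Fin.succAbove_right_injective hcon))
    · intro s hs
      rw [hYeq]
      apply mem_image_rigid hR
      have hid : t0 • tA j + s • tA j = (t0 + s) • tA j + (0:ℝ) • tA (j.succAbove 0) := by
        module
      rw [hid]
      exact tCone_mem (Ne.symm (hne 0)) (by linarith) le_rfl
    · intro m s hs
      rw [hYeq]
      apply mem_image_rigid hR
      have hs2 : (0:ℝ) ≤ Real.sqrt 2 := Real.sqrt_nonneg 2
      have hid : t0 • tA j + s • tV j (j.succAbove m) =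
          (t0 + s * (Real.sqrt 2 / 4)) • tA j +
          (s * (3 * Real.sqrt 2 / 4)) • tA (j.succAbove m) := by
        simp only [tV, smul_add, smul_smul]
        module
      rw [hid]
      exact tCone_mem (Ne.symm (hne m)) (by positivity) (by positivity)
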